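/- For all m ≥ 0 and all x, B_m(1-x) = ∑_{n=0}^{m} Ď_n(x) S(m,n), where Ď_n(x) are the Daehee polynomials of the second kind, S(m,n) are the Stirling numbers of the second kind, and B_m is the Bernoulli polynomial. -/

import Mathlib

open PowerSeries Finset

noncomputable def logOneAdd : PowerSeries ℚ :=
  PowerSeries.mk fun k => if k = 0 then 0 else (-1 : ℚ)^(k+1) / k

noncomputable def onePow (x : ℚ) : PowerSeries ℚ :=
  PowerSeries.mk fun k => (∏ i ∈ Finset.range k, (x - (i : ℚ))) / (Nat.factorial k : ℚ)

noncomputable def expX (x : ℚ) : PowerSeries ℚ :=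
  PowerSeries.mk fun k => x ^ k / (Nat.factorial k : ℚ)


noncomputable abbrev Ee : PowerSeries ℚ := PowerSeries.exp ℚ - 1

lemma constCoeff_Ee : constantCoeff Ee = 0 := by
  simp [Ee, constantCoeff_exp]

lemma coeff_Ee_pow_eq_zero {n m : ℕ} (h : m < n) : coeff m (Ee ^ n) = 0 := by
  have hX : (X : ℚ⟦X⟧) ∣ Ee := X_dvd_iff.mpr constCoeff_Ee
  have : (X : ℚ⟦X⟧) ^ n ∣ Ee ^ n := pow_dvd_pow_of_dvd hX n
  exact (X_pow_dvd_iff.mp this) m h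

noncomputable def pcomp (A : PowerSeries ℚ) : PowerSeries ℚ :=
  PowerSeries.mk fun m => ∑ n ∈ range (m+1), coeff n A * coeff m (Ee ^ n)

lemma coeff_pcomp {m N : ℕ} (h : m < N) (A : PowerSeries ℚ) :
    coeff m (pcomp A) = ∑ n ∈ range N, coeff n A * coeff m (Ee ^ n) := by
  rw [pcomp, coeff_mk]
  apply Finset.sum_subset
  · exact Finset.range_subset_range.mpr h
  · intro n hn hn'
    rw [coeff_Ee_pow_eq_zero (by simp at hn'; omega), mul_zero]

lemma coeff_eq_of_X_pow_dvd {F G : PowerSeries ℚ} {N m : ℕ}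
    (h : (X : ℚ⟦X⟧) ^ N ∣ F - G) (hm : m < N) : coeff m F = coeff m G := by
  have := (X_pow_dvd_iff.mp h) m hm
  rw [map_sub, sub_eq_zero] at this
  exact this

lemma aeval_trunc_eq_sum (A : PowerSeries ℚ) (N : ℕ) :
    Polynomial.aeval Ee (trunc (N+1) A) = ∑ i ∈ range (N+1), coeff i A • Ee ^ i := by
  rw [Polynomial.aeval_eq_sum_range' (natDegree_trunc_lt A N)]
  apply Finset.sum_congr rfl
  intro i hi
  rw [coeff_trunc]
  simp only [mem_range] at hi
  rw [if_pos hi]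

lemma coeff_aeval_trunc {m N : ℕ} (hm : m < N + 1) (A : PowerSeries ℚ) :
    coeff m (Polynomial.aeval Ee (trunc (N+1) A)) = coeff m (pcomp A) := by
  rw [aeval_trunc_eq_sum, map_sum, coeff_pcomp hm]
  apply Finset.sum_congr rfl
  intro i _
  rw [coeff_smul, smul_eq_mul]

lemma X_pow_dvd_sub_aeval_trunc (A : PowerSeries ℚ) (N : ℕ) :
    (X : ℚ⟦X⟧) ^ (N+1) ∣ pcomp A - Polynomial.aeval Ee (trunc (N+1) A) := by
  rw [X_pow_dvd_iff]
  intro m hm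
  rw [map_sub, coeff_aeval_trunc hm, sub_self]

lemma pcomp_mul (A B : PowerSeries ℚ) : pcomp (A * B) = pcomp A * pcomp B := by
  ext m
  set N := m + 1 with hN
  have hm : m < N := Nat.lt_succ_self m
  -- step 1 : coeff m (pcomp (A*B)) = coeff m (aeval (trunc N (A*B)))
  rw [← coeff_aeval_trunc hm (A*B)]
  -- step 2 : pcomp A * pcomp B agrees with aeval(truncA)*aeval(truncB) mod X^N
  have h2 : (X : ℚ⟦X⟧) ^ N ∣ pcomp A * pcomp B -
      Polynomial.aeval Ee (trunc N A) * Polynomial.aeval Ee (trunc N B) := by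
    have dA := X_pow_dvd_sub_aeval_trunc A m
    have dB := X_pow_dvd_sub_aeval_trunc B m
    have : pcomp A * pcomp B - Polynomial.aeval Ee (trunc N A) * Polynomial.aeval Ee (trunc N B)
        = (pcomp A - Polynomial.aeval Ee (trunc N A)) * pcomp B
          + Polynomial.aeval Ee (trunc N A) * (pcomp B - Polynomial.aeval Ee (trunc N B)) := by
      ring
    rw [this]
    exact dvd_add (Dvd.dvd.mul_right dA _) (Dvd.dvd.mul_left dB _)
  rw [coeff_eq_of_X_pow_dvd h2 hm, ← map_mul]
  -- step 3 : trunc N (A*B) ≡ trunc N A * trunc N B mod X^N in ℚ[X]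
  have h3 : (Polynomial.X : Polynomial ℚ) ^ N ∣ trunc N A * trunc N B - trunc N (A * B) := by
    rw [Polynomial.X_pow_dvd_iff]
    intro d hd
    rw [Polynomial.coeff_sub, Polynomial.coeff_mul, coeff_trunc, if_pos hd,
      PowerSeries.coeff_mul, sub_eq_zero]
    apply Finset.sum_congr rfl
    intro p hp
    rw [Finset.HasAntidiagonal.mem_antidiagonal] at hp
    rw [coeff_trunc, coeff_trunc, if_pos (by omega), if_pos (by omega)]
  obtain ⟨r, hr⟩ := h3
  have h4 : Polynomial.aeval Ee (trunc N A * trunc N B) - Polynomial.aeval Ee (trunc N (A*B))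
      = Ee ^ N * Polynomial.aeval Ee r := by
    rw [← map_sub, hr, map_mul, map_pow, Polynomial.aeval_X]
  have h5 : (X : ℚ⟦X⟧) ^ N ∣ Polynomial.aeval Ee (trunc N A * trunc N B)
      - Polynomial.aeval Ee (trunc N (A*B)) := by
    rw [h4]
    exact Dvd.dvd.mul_right (pow_dvd_pow_of_dvd (X_dvd_iff.mpr constCoeff_Ee) N) _
  exact (coeff_eq_of_X_pow_dvd h5 hm).symm

lemma pcomp_add (A B : PowerSeries ℚ) : pcomp (A + B) = pcomp A + pcomp B := by
  ext m
  simp only [pcomp, coeff_mk, map_add, ← Finset.sum_add_distrib]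
  apply Finset.sum_congr rfl
  intro n _
  ring

lemma pcomp_C (a : ℚ) : pcomp (C a) = C a := by
  ext m
  rw [pcomp, coeff_mk]
  rw [Finset.sum_eq_single 0]
  · simp [coeff_C, pow_zero, PowerSeries.coeff_one]
  · intro n _ hn
    simp [coeff_C, hn]
  · intro h
    simp at h

lemma pcomp_one : pcomp 1 = 1 := by
  have := pcomp_C 1
  rwa [map_one] at this

lemma pcomp_X : pcomp X = Ee := by
  ext m
  rw [coeff_pcomp (Nat.lt_succ_of_lt (Nat.lt_succ_self m)) X]
  rw [Finset.sum_eq_single 1]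
  · simp [coeff_X]
  · intro n _ hn
    simp [coeff_X, hn]
  · intro h
    simp at h
lemma derivative_exp' : d⁄dX ℚ (PowerSeries.exp ℚ) = PowerSeries.exp ℚ := by
  ext n
  rw [coeff_derivative, coeff_exp, coeff_exp]
  have h1 : ((n+1).factorial : ℚ) = (n+1) * n.factorial := by
    rw [Nat.factorial_succ]; push_cast; ring
  have h2 : ((n:ℚ)+1) ≠ 0 := by positivity
  have h3 : (n.factorial : ℚ) ≠ 0 := Nat.cast_ne_zero.mpr n.factorial_ne_zero
  simp only [Algebra.algebraMap_self, RingHom.id_apply]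
  rw [h1]
  field_simp

lemma derivative_Ee : d⁄dX ℚ Ee = PowerSeries.exp ℚ := by
  show d⁄dX ℚ (PowerSeries.exp ℚ - 1) = _
  rw [map_sub, derivative_exp', Derivation.map_one_eq_zero, sub_zero]

lemma coeff_derivative_Ee_pow (n m : ℕ) :
    coeff m (d⁄dX ℚ (Ee ^ n)) = n * coeff m (Ee ^ (n-1) * PowerSeries.exp ℚ) := by
  rw [Derivation.leibniz_pow, derivative_Ee]
  rw [smul_eq_mul, map_nsmul, nsmul_eq_mul]

lemma derivative_pcomp (A : PowerSeries ℚ) :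
    d⁄dX ℚ (pcomp A) = pcomp (d⁄dX ℚ A) * PowerSeries.exp ℚ := by
  ext m
  have lhs_eq : coeff m (d⁄dX ℚ (pcomp A))
      = ∑ i ∈ range (m+1), coeff (i+1) A * ((i:ℚ)+1) * coeff m (Ee ^ i * PowerSeries.exp ℚ) := by
    rw [coeff_derivative, coeff_pcomp (show m+1 < m+2 by omega), Finset.sum_mul]
    have : ∀ n ∈ range (m+2), coeff n A * coeff (m+1) (Ee^n) * ((m:ℚ)+1)
        = coeff n A * ((n:ℚ) * coeff m (Ee ^ (n-1) * PowerSeries.exp ℚ)) := by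
      intro n _
      rw [← coeff_derivative_Ee_pow, coeff_derivative]; ring
    rw [Finset.sum_congr rfl this, Finset.sum_range_succ']
    simp only [Nat.cast_zero, zero_mul, mul_zero, add_zero, Nat.add_sub_cancel]
    apply Finset.sum_congr rfl
    intro i _
    push_cast
    ring
  rw [lhs_eq, PowerSeries.coeff_mul]
  have step : ∀ p ∈ antidiagonal m, coeff p.1 (pcomp (d⁄dX ℚ A)) * coeff p.2 (PowerSeries.exp ℚ)
      = ∑ n ∈ range (m+1), coeff n (d⁄dX ℚ A) * (coeff p.1 (Ee^n) * coeff p.2 (PowerSeries.exp ℚ)) := by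
    intro p hp
    have h1 : p.1 < m + 1 := Nat.lt_succ_of_le (Finset.HasAntidiagonal.antidiagonal.fst_le hp)
    rw [coeff_pcomp h1, Finset.sum_mul]
    exact Finset.sum_congr rfl fun n _ => by ring
  rw [Finset.sum_congr rfl step, Finset.sum_comm]
  apply Finset.sum_congr rfl
  intro n _
  rw [← Finset.mul_sum, ← PowerSeries.coeff_mul, coeff_derivative]
  try ring

lemma constantCoeff_pcomp (A : PowerSeries ℚ) : coeff 0 (pcomp A) = coeff 0 A := by
  rw [pcomp, coeff_mk, Finset.sum_range_one, pow_zero]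
  simp

lemma exp_ne_zero' : PowerSeries.exp ℚ ≠ 0 := by
  intro h
  have := constantCoeff_exp (A := ℚ)
  rw [h, map_zero] at this
  norm_num at this

lemma Ee_ne_zero : Ee ≠ 0 := by
  intro h
  have : coeff 1 Ee = 0 := by rw [h, map_zero]
  rw [map_sub, coeff_exp, coeff_one] at this
  norm_num at this

lemma expX_eq_rescale (c : ℚ) : expX c = rescale c (PowerSeries.exp ℚ) := by
  ext k
  rw [expX, coeff_mk, coeff_rescale, coeff_exp]
  simp only [Algebra.algebraMap_self, RingHom.id_apply]
  rw [mul_one_div]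

lemma expX_mul (a b : ℚ) : expX a * expX b = expX (a + b) := by
  rw [expX_eq_rescale, expX_eq_rescale, expX_eq_rescale, exp_mul_exp_eq_exp_add]

lemma expX_one : expX 1 = PowerSeries.exp ℚ := by
  rw [expX_eq_rescale, rescale_one, RingHom.id_apply]

lemma expX_ne_zero (c : ℚ) : expX c ≠ 0 := by
  intro h
  have : coeff 0 (expX c) = 0 := by rw [h, map_zero]
  rw [expX, coeff_mk] at this
  norm_num at this

lemma eq_expX {F : PowerSeries ℚ} {c : ℚ} (h0 : coeff 0 F = 1)
    (h1 : d⁄dX ℚ F = C c * F) : F = expX c := by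
  have key : ∀ n, coeff n F = c ^ n / n.factorial := by
    intro n
    induction n with
    | zero => simpa using h0
    | succ k ih =>
      have h2 := congrArg (coeff k) h1
      rw [coeff_derivative, coeff_C_mul, ih] at h2
      have h3 : ((k:ℚ)+1) ≠ 0 := by positivity
      have h4 : (k.factorial : ℚ) ≠ 0 := Nat.cast_ne_zero.mpr k.factorial_ne_zero
      have h5 : ((k+1).factorial : ℚ) = ((k:ℚ)+1) * k.factorial := by
        rw [Nat.factorial_succ]; push_cast; ring
      have h6 : coeff (k+1) F = c * (c ^ k / k.factorial) / ((k:ℚ)+1) := by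
        field_simp at h2 ⊢
        linarith [h2]
      rw [h6, h5, pow_succ]
      field_simp
  ext n
  rw [key n, expX, coeff_mk]

-- relation for logOneAdd
lemma coeff_d_logOneAdd (k : ℕ) : coeff k (d⁄dX ℚ logOneAdd) = (-1 : ℚ)^k := by
  rw [coeff_derivative, logOneAdd, coeff_mk]
  have h3 : ((k:ℚ)+1) ≠ 0 := by positivity
  simp only [Nat.succ_ne_zero, if_false]
  push_cast
  rw [pow_succ, pow_succ]
  field_simp

lemma logOneAdd_rel : (1 + X) * d⁄dX ℚ logOneAdd = 1 := by
  ext m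
  rw [add_mul, one_mul, map_add]
  cases m with
  | zero =>
    rw [coeff_zero_X_mul, coeff_d_logOneAdd]
    simp
  | succ k =>
    rw [coeff_succ_X_mul, coeff_d_logOneAdd, coeff_d_logOneAdd, coeff_one]
    simp [pow_succ]

-- relation for onePow
lemma coeff_d_onePow (x : ℚ) (k : ℕ) :
    coeff k (d⁄dX ℚ (onePow x)) = (∏ i ∈ range (k+1), (x - (i:ℚ))) / k.factorial := by
  rw [coeff_derivative, onePow, coeff_mk]
  have h3 : ((k:ℚ)+1) ≠ 0 := by positivity
  have h4 : (k.factorial : ℚ) ≠ 0 := Nat.cast_ne_zero.mpr k.factorial_ne_zero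
  have h5 : ((k+1).factorial : ℚ) = ((k:ℚ)+1) * k.factorial := by
    rw [Nat.factorial_succ]; push_cast; ring
  rw [h5]
  field_simp

lemma onePow_rel (x : ℚ) : (1 + X) * d⁄dX ℚ (onePow x) = C x * onePow x := by
  ext m
  rw [add_mul, one_mul, map_add, coeff_C_mul]
  cases m with
  | zero =>
    rw [coeff_zero_X_mul, coeff_d_onePow, onePow, coeff_mk]
    simp
  | succ k =>
    rw [coeff_succ_X_mul, coeff_d_onePow, coeff_d_onePow, onePow, coeff_mk]
    have h3 : ((k:ℚ)+1) ≠ 0 := by positivity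
    have h4 : (k.factorial : ℚ) ≠ 0 := Nat.cast_ne_zero.mpr k.factorial_ne_zero
    have h5 : ((k+1).factorial : ℚ) = ((k:ℚ)+1) * k.factorial := by
      rw [Nat.factorial_succ]; push_cast; ring
    rw [prod_range_succ (f := fun i => x - (i:ℚ)) (n := k+1), h5]
    push_cast
    field_simp
    ring

lemma pcomp_logOneAdd : pcomp logOneAdd = X := by
  have h1 := congrArg pcomp logOneAdd_rel
  rw [pcomp_mul, pcomp_add, pcomp_one, pcomp_X] at h1
  have hE : (1 : ℚ⟦X⟧) + Ee = PowerSeries.exp ℚ := by ring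
  rw [hE] at h1
  -- h1 : exp * pcomp (d logOneAdd) = 1
  have h2 := derivative_pcomp logOneAdd
  have h3 : PowerSeries.exp ℚ * d⁄dX ℚ (pcomp logOneAdd) = PowerSeries.exp ℚ * 1 := by
    rw [h2, mul_one, ← mul_assoc, h1, one_mul]
  have h4 : d⁄dX ℚ (pcomp logOneAdd) = 1 := mul_left_cancel₀ exp_ne_zero' h3
  apply derivative.ext (g := X)
  · rw [h4, derivative_X]
  · rw [← coeff_zero_eq_constantCoeff_apply, ← coeff_zero_eq_constantCoeff_apply,
      constantCoeff_pcomp, logOneAdd, coeff_mk, coeff_X]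
    simp

lemma pcomp_onePow (x : ℚ) : pcomp (onePow x) = expX x := by
  have h1 := congrArg pcomp (onePow_rel x)
  rw [pcomp_mul, pcomp_mul, pcomp_add, pcomp_one, pcomp_X, pcomp_C] at h1
  have hE : (1 : ℚ⟦X⟧) + Ee = PowerSeries.exp ℚ := by ring
  rw [hE] at h1
  -- h1 : exp * pcomp (d (onePow x)) = C x * pcomp (onePow x)
  have h2 := derivative_pcomp (onePow x)
  have h3 : PowerSeries.exp ℚ * d⁄dX ℚ (pcomp (onePow x))
      = PowerSeries.exp ℚ * (C x * pcomp (onePow x)) := by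
    rw [h2, ← mul_assoc, h1]
    ring
  have h4 := mul_left_cancel₀ exp_ne_zero' h3
  apply eq_expX
  · rw [constantCoeff_pcomp, onePow, coeff_mk]
    simp
  · exact h4

theorem bernoulli_one_sub_daehee2_stirling2 (Dhp Bp : ℕ → ℚ → ℚ) (S : ℕ → ℕ → ℚ)
    (hDhp : ∀ x : ℚ, PowerSeries.mk (fun n => Dhp n x / (Nat.factorial n : ℚ)) * PowerSeries.X * onePow x = (1 + PowerSeries.X) * logOneAdd) (hBp : ∀ x : ℚ, PowerSeries.mk (fun m => Bp m x / (Nat.factorial m : ℚ)) * (PowerSeries.exp ℚ - 1) = PowerSeries.X * expX x) (hS : ∀ n : ℕ, (PowerSeries.exp ℚ - 1) ^ n = PowerSeries.C (R := ℚ) (Nat.factorial n : ℚ) * PowerSeries.mk (fun m => S m n / (Nat.factorial m : ℚ))) :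
    ∀ (m : ℕ) (x : ℚ), Bp m (1 - x) = ∑ n ∈ Finset.range (m + 1), Dhp n x * S m n := by
  intro m x
  set A : PowerSeries ℚ := PowerSeries.mk (fun n => Dhp n x / (Nat.factorial n : ℚ)) with hA
  have h1 := congrArg pcomp (hDhp x)
  rw [pcomp_mul, pcomp_mul, pcomp_mul, pcomp_add, pcomp_one, pcomp_X,
    pcomp_logOneAdd, pcomp_onePow] at h1
  have hE : (1 : ℚ⟦X⟧) + Ee = PowerSeries.exp ℚ := by ring
  rw [hE] at h1
  -- h1 : pcomp A * Ee * expX x = exp * X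
  have hexp : PowerSeries.exp ℚ = expX (1 - x) * expX x := by
    rw [expX_mul, sub_add_cancel, expX_one]
  have h2 : (pcomp A * Ee) * expX x = (X * expX (1 - x)) * expX x := by
    rw [h1, hexp]; ring
  have h3 : pcomp A * Ee = X * expX (1 - x) := mul_right_cancel₀ (expX_ne_zero x) h2
  have h4 : PowerSeries.mk (fun k => Bp k (1 - x) / (Nat.factorial k : ℚ)) * Ee = pcomp A * Ee := by
    rw [h3]
    exact hBp (1 - x)
  have h5 := mul_right_cancel₀ Ee_ne_zero h4
  have h6 := congrArg (coeff m) h5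
  rw [coeff_mk, coeff_pcomp (Nat.lt_succ_self m)] at h6
  have hfac : (m.factorial : ℚ) ≠ 0 := Nat.cast_ne_zero.mpr m.factorial_ne_zero
  have h7 : ∀ n ∈ range (m+1), coeff n A * coeff m (Ee ^ n)
      = Dhp n x * S m n / m.factorial := by
    intro n _
    have hfn : (n.factorial : ℚ) ≠ 0 := Nat.cast_ne_zero.mpr n.factorial_ne_zero
    rw [hA, coeff_mk, hS n, coeff_C_mul, coeff_mk]
    field_simp
  rw [Finset.sum_congr rfl h7, ← Finset.sum_div] at h6
  field_simp at h6
  linarith [h6]
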